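/- For every RMPC reachable process R, the underlying continuous-time Markov chain M⟦R⟧ is time homogeneous and ergodic: its state graph is a finite strongly connected component. -/

import Mathlib

namespace RMPC

/-- Syntax of RMPC processes: standard forward processes are those without
executed (key-decorated) prefixes; reversible processes may contain them. -/
inductive Proc : Type
  | nil : Proc
  | pre (a : ℕ) (lam : ℝ) (P : Proc) : Proc
  | preK (a : ℕ) (lam : ℝ) (i : ℕ) (P : Proc) : Proc
  | choice (P Q : Proc) : Proc
  | par (L : Set ℕ) (P Q : Proc) : Proc

/-- Standard forward processes: no executed (keyed) prefix occurs. -/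
def std : Proc → Prop
  | .nil => True
  | .pre _ _ P => std P
  | .preK _ _ _ _ => False
  | .choice P Q => std P ∧ std Q
  | .par _ P Q => std P ∧ std Q

/-- The set of communication keys occurring in a process. -/
def keys : Proc → Finset ℕ
  | .nil => ∅
  | .pre _ _ P => keys P
  | .preK _ _ i P => insert i (keys P)
  | .choice P Q => keys P ∪ keys Q
  | .par _ P Q => keys P ∪ keys Q

/-- Transition labels `<a,λ>[i]`: an action, a rate and a communication key. -/
structure Label where
  act : ℕ
  rate : ℝ
  key : ℕ

/-- Forward transition relation of RMPC (rules Act1, Act2, Cho, Par, Coo). -/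
inductive Fw : Proc → Label → Proc → Prop
  | act1 {a : ℕ} {lam : ℝ} (i : ℕ) {P : Proc} : std P →
      Fw (.pre a lam P) ⟨a, lam, i⟩ (.preK a lam i P)
  | act2 {a : ℕ} {lam : ℝ} {i : ℕ} {b : ℕ} {mu : ℝ} {j : ℕ} {R R' : Proc} :
      Fw R ⟨b, mu, j⟩ R' → j ≠ i →
      Fw (.preK a lam i R) ⟨b, mu, j⟩ (.preK a lam i R')
  | choL {R R' S : Proc} {ℓ : Label} : Fw R ℓ R' → std S →
      Fw (.choice R S) ℓ (.choice R' S)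
  | choR {R S S' : Proc} {ℓ : Label} : Fw S ℓ S' → std R →
      Fw (.choice R S) ℓ (.choice R S')
  | parL {L : Set ℕ} {R R' S : Proc} {a : ℕ} {lam : ℝ} {i : ℕ} :
      Fw R ⟨a, lam, i⟩ R' → a ∉ L → i ∉ keys S →
      Fw (.par L R S) ⟨a, lam, i⟩ (.par L R' S)
  | parR {L : Set ℕ} {R S S' : Proc} {a : ℕ} {lam : ℝ} {i : ℕ} :
      Fw S ⟨a, lam, i⟩ S' → a ∉ L → i ∉ keys R →
      Fw (.par L R S) ⟨a, lam, i⟩ (.par L R S')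
  | coo {L : Set ℕ} {R R' S S' : Proc} {a : ℕ} {lam mu : ℝ} {i : ℕ} :
      Fw R ⟨a, lam, i⟩ R' → Fw S ⟨a, mu, i⟩ S' → a ∈ L →
      Fw (.par L R S) ⟨a, lam * mu, i⟩ (.par L R' S')

/-- Backward transition relation of RMPC, parameterized by the function `bw`
assigning to each forward rate `λ` the corresponding backward rate `λ̄`
(rules Act1ʳ, Act2ʳ, Choʳ, Parʳ, Cooʳ). -/
inductive Bw (bw : ℝ → ℝ) : Proc → Label → Proc → Prop
  | act1 {a : ℕ} {lam : ℝ} (i : ℕ) {P : Proc} : std P →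
      Bw bw (.preK a lam i P) ⟨a, bw lam, i⟩ (.pre a lam P)
  | act2 {a : ℕ} {lam : ℝ} {i : ℕ} {b : ℕ} {mu : ℝ} {j : ℕ} {R R' : Proc} :
      Bw bw R ⟨b, mu, j⟩ R' → j ≠ i →
      Bw bw (.preK a lam i R) ⟨b, mu, j⟩ (.preK a lam i R')
  | choL {R R' S : Proc} {ℓ : Label} : Bw bw R ℓ R' → std S →
      Bw bw (.choice R S) ℓ (.choice R' S)
  | choR {R S S' : Proc} {ℓ : Label} : Bw bw S ℓ S' → std R →
      Bw bw (.choice R S) ℓ (.choice R S')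
  | parL {L : Set ℕ} {R R' S : Proc} {a : ℕ} {lam : ℝ} {i : ℕ} :
      Bw bw R ⟨a, lam, i⟩ R' → a ∉ L → i ∉ keys S →
      Bw bw (.par L R S) ⟨a, lam, i⟩ (.par L R' S)
  | parR {L : Set ℕ} {R S S' : Proc} {a : ℕ} {lam : ℝ} {i : ℕ} :
      Bw bw S ⟨a, lam, i⟩ S' → a ∉ L → i ∉ keys R →
      Bw bw (.par L R S) ⟨a, lam, i⟩ (.par L R S')
  | coo {L : Set ℕ} {R R' S S' : Proc} {a : ℕ} {lam mu : ℝ} {i : ℕ} :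
      Bw bw R ⟨a, lam, i⟩ R' → Bw bw S ⟨a, mu, i⟩ S' → a ∈ L →
      Bw bw (.par L R S) ⟨a, lam * mu, i⟩ (.par L R' S')

/-- The backward label `<a,λ̄>[i]` corresponding to a forward label `<a,λ>[i]`. -/
def bwLab (bw : ℝ → ℝ) (ℓ : Label) : Label := ⟨ℓ.act, bw ℓ.rate, ℓ.key⟩

/-- One forward step (any label). -/
def FwStep (R S : Proc) : Prop := ∃ ℓ, Fw R ℓ S

/-- Reachable processes: standard forward processes together with everything
derivable from them by finitely many forward transitions. -/
def Reachable (R : Proc) : Prop := ∃ P, std P ∧ Relation.ReflTransGen FwStep P R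

/-- Sequences of forward transitions labeled by a sequence of labels. -/
inductive FwSeq : Proc → List Label → Proc → Prop
  | nil (R : Proc) : FwSeq R [] R
  | cons {R R' S : Proc} {ℓ : Label} {σ : List Label} :
      Fw R ℓ R' → FwSeq R' σ S → FwSeq R (ℓ :: σ) S

/-- Sequences of backward transitions labeled by a sequence of labels. -/
inductive BwSeq (bw : ℝ → ℝ) : Proc → List Label → Proc → Prop
  | nil (R : Proc) : BwSeq bw R [] R
  | cons {R R' S : Proc} {ℓ : Label} {σ : List Label} :
      Bw bw R ℓ R' → BwSeq bw R' σ S → BwSeq bw R (ℓ :: σ) S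

/-- Direction of a transition. -/
inductive Dir : Type
  | fw : Dir
  | bk : Dir

/-- A transition in either direction. -/
def Trans (bw : ℝ → ℝ) : Dir → Proc → Label → Proc → Prop
  | .fw => Fw
  | .bk => Bw bw

/-- The causal set of a process until a key: the keys appearing syntactically
before (i.e., causing) the given key. -/
def cau : Proc → ℕ → Finset ℕ
  | .nil, _ => ∅
  | .pre _ _ _, _ => ∅
  | .preK _ _ j R, i => if j = i ∨ i ∉ keys R then ∅ else insert j (cau R i)
  | .choice R S, i => cau R i ∪ cau S i
  | .par _ R S, i => cau R i ∪ cau S i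

/-- Process contexts (processes with a hole). -/
inductive Ctx : Type
  | hole : Ctx
  | preK (a : ℕ) (lam : ℝ) (i : ℕ) (c : Ctx) : Ctx
  | choL (c : Ctx) (S : Proc) : Ctx
  | choR (R : Proc) (c : Ctx) : Ctx
  | parL (L : Set ℕ) (c : Ctx) (S : Proc) : Ctx
  | parR (L : Set ℕ) (R : Proc) (c : Ctx) : Ctx

/-- Plugging a process into the hole of a context. -/
def plug : Ctx → Proc → Proc
  | .hole, R => R
  | .preK a lam i c, R => .preK a lam i (plug c R)
  | .choL c S, R => .choice (plug c R) S
  | .choR Q c, R => .choice Q (plug c R)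
  | .parL L c S, R => .par L (plug c R) S
  | .parR L Q c, R => .par L Q (plug c R)

/-- Two coinitial forward transitions derive from the two branches of the same
choice operator (condition 2 of the definition of conflicting transitions). -/
def ChoiceConf (R : Proc) (ℓ₁ : Label) (S₁ : Proc) (ℓ₂ : Label) (S₂ : Proc) : Prop :=
  ∃ C P₁ P₂, R = plug C (.choice P₁ P₂) ∧
    ((∃ T₁ T₂, Fw P₁ ℓ₁ T₁ ∧ Fw P₂ ℓ₂ T₂ ∧
        S₁ = plug C (.choice T₁ P₂) ∧ S₂ = plug C (.choice P₁ T₂)) ∨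
     (∃ T₁ T₂, Fw P₂ ℓ₁ T₂ ∧ Fw P₁ ℓ₂ T₁ ∧
        S₁ = plug C (.choice P₁ T₂) ∧ S₂ = plug C (.choice T₁ P₂)))

/-- Conflict of two coinitial transitions from `R`:
(1) a forward and a backward transition where the backward one undoes a cause
of the forward one's key, or (2) two forward transitions arising from the two
branches of the same choice. -/
def Conflict (R : Proc) (d₁ : Dir) (ℓ₁ : Label) (S₁ : Proc)
    (d₂ : Dir) (ℓ₂ : Label) (S₂ : Proc) : Prop :=
  (d₁ = .fw ∧ d₂ = .bk ∧ ℓ₂.key ∈ cau S₁ ℓ₁.key) ∨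
  (d₁ = .bk ∧ d₂ = .fw ∧ ℓ₁.key ∈ cau S₂ ℓ₂.key) ∨
  (d₁ = .fw ∧ d₂ = .fw ∧ ChoiceConf R ℓ₁ S₁ ℓ₂ S₂)

/-- Two coinitial transitions are concurrent when they are not in conflict. -/
def Concurrent (R : Proc) (d₁ : Dir) (ℓ₁ : Label) (S₁ : Proc)
    (d₂ : Dir) (ℓ₂ : Label) (S₂ : Proc) : Prop :=
  ¬ Conflict R d₁ ℓ₁ S₁ d₂ ℓ₂ S₂ ∧ ¬ Conflict R d₂ ℓ₂ S₂ d₁ ℓ₁ S₁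


/-- Renaming of communication keys. -/
def rename (f : ℕ → ℕ) : Proc → Proc
  | .nil => .nil
  | .pre a lam P => .pre a lam (rename f P)
  | .preK a lam i P => .preK a lam (f i) (rename f P)
  | .choice P Q => .choice (rename f P) (rename f Q)
  | .par L P Q => .par L (rename f P) (rename f Q)

/-- The equivalence `≡_K`: processes that are syntactically identical up to a
consistent (bijective) renaming of keys in the same positions. -/
def KEq (R S : Proc) : Prop := ∃ f : ℕ ≃ ℕ, S = rename f R

/-- A transition of the underlying CTMC `M⟦R⟧` before quotienting: a forward
or backward transition with action `a` and rate `l`, the key being dropped. -/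
def Step (bw : ℝ → ℝ) (R : Proc) (a : ℕ) (l : ℝ) (S : Proc) : Prop :=
  ∃ i, Fw R ⟨a, l, i⟩ S ∨ Bw bw R ⟨a, l, i⟩ S

/-- A transition of `M⟦R⟧` in either direction, any label. -/
def AnyStep (bw : ℝ → ℝ) (R S : Proc) : Prop := ∃ a l, Step bw R a l S

/-- Reachability in `M⟦R⟧` (via forward and backward transitions). -/
def ReachAny (bw : ℝ → ℝ) : Proc → Proc → Prop :=
  Relation.ReflTransGen (AnyStep bw)

/-- The set of action-rate pairs labeling the transition bundles of `M⟦R⟧`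
from the class of `S` to the class of `S'`. -/
def KStepSet (bw : ℝ → ℝ) (S S' : Proc) : Set (ℕ × ℝ) :=
  {p | ∃ T T', KEq S T ∧ KEq S' T' ∧ Step bw T p.1 p.2 T'}

/-- The total rate in `M⟦R⟧` from the class of `S` to the class of `S'`. -/
noncomputable def q (bw : ℝ → ℝ) (S S' : Proc) : ℝ :=
  ∑ᶠ p ∈ KStepSet bw S S', p.2

/-- `F` is a finite set of representatives of the states of `M⟦R⟧`:
one representative per `≡_K`-class of processes reachable from `R`. -/
def RepSet (bw : ℝ → ℝ) (R : Proc) (F : Finset Proc) : Prop :=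
  (∀ T ∈ F, ReachAny bw R T) ∧
  (∀ S, ReachAny bw R S → ∃ T ∈ F, KEq S T) ∧
  (∀ T ∈ F, ∀ T' ∈ F, KEq T T' → T = T')

/-- A forward transition of `M⟦R⟧` between classes. -/
def FwKStep (S S' : Proc) : Prop := ∃ T T' ℓ, KEq S T ∧ KEq S' T' ∧ Fw T ℓ T'

/-- A backward transition of `M⟦R⟧` between classes. -/
def BwKStep (bw : ℝ → ℝ) (S S' : Proc) : Prop :=
  ∃ T T' ℓ, KEq S T ∧ KEq S' T' ∧ Bw bw T ℓ T'

/-- The parallel composition operator does not occur in the process. -/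
def noPar : Proc → Prop
  | .nil => True
  | .pre _ _ P => noPar P
  | .preK _ _ _ P => noPar P
  | .choice P Q => noPar P ∧ noPar Q
  | .par _ _ _ => False

/-! ### Auxiliary definitions and lemmas -/

noncomputable instance : DecidableEq Proc := Classical.decEq Proc

/-- Number of prefixes of a process. -/
def nk : Proc → ℕ
  | .nil => 0
  | .pre _ _ P => nk P + 1
  | .preK _ _ _ P => nk P + 1
  | .choice P Q => nk P + nk Q
  | .par _ P Q => nk P + nk Q

/-- `Der P S` : `S` is obtained from the standard process `P` by turning some
prefixes into keyed prefixes (the invariant preserved by transitions). -/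
inductive Der : Proc → Proc → Prop
  | nil : Der .nil .nil
  | pre {a : ℕ} {lam : ℝ} {Q : Proc} : std Q → Der (.pre a lam Q) (.pre a lam Q)
  | preK {a : ℕ} {lam : ℝ} {Q : Proc} {i : ℕ} {S : Proc} :
      Der Q S → Der (.pre a lam Q) (.preK a lam i S)
  | choice {Q1 Q2 S1 S2 : Proc} : Der Q1 S1 → Der Q2 S2 →
      Der (.choice Q1 Q2) (.choice S1 S2)
  | par {L : Set ℕ} {Q1 Q2 S1 S2 : Proc} : Der Q1 S1 → Der Q2 S2 →
      Der (.par L Q1 Q2) (.par L S1 S2)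

theorem std_keys : ∀ {P : Proc}, std P → keys P = ∅
  | .nil, _ => rfl
  | .pre _ _ P, h => std_keys (P := P) h
  | .preK _ _ _ _, h => h.elim
  | .choice P Q, h => by
      obtain ⟨h1, h2⟩ := h
      simp [keys, std_keys h1, std_keys h2]
  | .par _ P Q, h => by
      obtain ⟨h1, h2⟩ := h
      simp [keys, std_keys h1, std_keys h2]

theorem std_rename (f : ℕ → ℕ) : ∀ {P : Proc}, std P → rename f P = P
  | .nil, _ => rfl
  | .pre _ _ P, h => by simp [rename, std_rename f (P := P) h]
  | .preK _ _ _ _, h => h.elim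
  | .choice P Q, h => by
      obtain ⟨h1, h2⟩ := h
      simp [rename, std_rename f h1, std_rename f h2]
  | .par _ P Q, h => by
      obtain ⟨h1, h2⟩ := h
      simp [rename, std_rename f h1, std_rename f h2]

theorem keys_rename (f : ℕ → ℕ) : ∀ P : Proc, keys (rename f P) = (keys P).image f
  | .nil => by simp [rename, keys]
  | .pre a lam P => by simp [rename, keys, keys_rename f P]
  | .preK a lam i P => by simp [rename, keys, keys_rename f P]
  | .choice P Q => by
      simp [rename, keys, keys_rename f P, keys_rename f Q, Finset.image_union]
  | .par L P Q => by
      simp [rename, keys, keys_rename f P, keys_rename f Q, Finset.image_union]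

theorem der_refl : ∀ {P : Proc}, std P → Der P P
  | .nil, _ => .nil
  | .pre _ _ _, h => .pre h
  | .preK _ _ _ _, h => h.elim
  | .choice _ _, h => .choice (der_refl h.1) (der_refl h.2)
  | .par _ _ _, h => .par (der_refl h.1) (der_refl h.2)

theorem der_std_eq {P S : Proc} (h : Der P S) (hs : std S) : S = P := by
  induction h with
  | nil => rfl
  | pre => rfl
  | preK _ _ => exact hs.elim
  | choice h1 h2 ih1 ih2 =>
      obtain ⟨hs1, hs2⟩ := hs; rw [ih1 hs1, ih2 hs2]
  | par h1 h2 ih1 ih2 =>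
      obtain ⟨hs1, hs2⟩ := hs; rw [ih1 hs1, ih2 hs2]

theorem der_fw {S ℓ S'} (h : Fw S ℓ S') : ∀ {P : Proc}, Der P S → Der P S' := by
  induction h with
  | act1 i hstd =>
      intro P hd
      cases hd with
      | pre h => exact .preK (der_refl hstd)
  | act2 h hne ih =>
      intro P hd
      cases hd with
      | preK hq => exact .preK (ih hq)
  | choL h hs ih =>
      intro P hd
      cases hd with
      | choice h1 h2 => exact .choice (ih h1) h2
  | choR h hs ih =>
      intro P hd
      cases hd with
      | choice h1 h2 => exact .choice h1 (ih h2)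
  | parL h ha hi ih =>
      intro P hd
      cases hd with
      | par h1 h2 => exact .par (ih h1) h2
  | parR h ha hi ih =>
      intro P hd
      cases hd with
      | par h1 h2 => exact .par h1 (ih h2)
  | coo h1 h2 ha ih1 ih2 =>
      intro P hd
      cases hd with
      | par hd1 hd2 => exact .par (ih1 hd1) (ih2 hd2)

theorem der_bw {bw : ℝ → ℝ} {S ℓ S'} (h : Bw bw S ℓ S') :
    ∀ {P : Proc}, Der P S → Der P S' := by
  induction h with
  | act1 i hstd =>
      intro P hd
      cases hd with
      | preK hq =>
          have := der_std_eq hq hstd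
          subst this
          exact .pre hstd
  | act2 h hne ih =>
      intro P hd
      cases hd with
      | preK hq => exact .preK (ih hq)
  | choL h hs ih =>
      intro P hd
      cases hd with
      | choice h1 h2 => exact .choice (ih h1) h2
  | choR h hs ih =>
      intro P hd
      cases hd with
      | choice h1 h2 => exact .choice h1 (ih h2)
  | parL h ha hi ih =>
      intro P hd
      cases hd with
      | par h1 h2 => exact .par (ih h1) h2
  | parR h ha hi ih =>
      intro P hd
      cases hd with
      | par h1 h2 => exact .par h1 (ih h2)
  | coo h1 h2 ha ih1 ih2 =>
      intro P hd
      cases hd with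
      | par hd1 hd2 => exact .par (ih1 hd1) (ih2 hd2)

/-- Loop lemma, forward to backward. -/
theorem fw_bw {bw : ℝ → ℝ} (hbw : ∀ x y : ℝ, bw (x * y) = bw x * bw y)
    {S ℓ S'} (h : Fw S ℓ S') : Bw bw S' ⟨ℓ.act, bw ℓ.rate, ℓ.key⟩ S := by
  induction h with
  | act1 i hstd => exact .act1 i hstd
  | act2 h hne ih => exact .act2 ih hne
  | choL h hs ih => exact .choL ih hs
  | choR h hs ih => exact .choR ih hs
  | parL h ha hi ih => exact .parL ih ha hi
  | parR h ha hi ih => exact .parR ih ha hi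
  | @coo L R R' S S' a lam mu i h1 h2 ha ih1 ih2 =>
      have := Bw.coo (bw := bw) ih1 ih2 ha
      simpa [hbw] using this

/-- Loop lemma, backward to forward. -/
theorem bw_fw {bw : ℝ → ℝ} {S ℓ S'} (h : Bw bw S ℓ S') :
    ∃ l', Fw S' ⟨ℓ.act, l', ℓ.key⟩ S := by
  induction h with
  | act1 i hstd => exact ⟨_, .act1 i hstd⟩
  | act2 h hne ih =>
      obtain ⟨l', hf⟩ := ih
      exact ⟨l', .act2 hf hne⟩
  | choL h hs ih =>
      obtain ⟨l', hf⟩ := ih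
      exact ⟨l', .choL hf hs⟩
  | choR h hs ih =>
      obtain ⟨l', hf⟩ := ih
      exact ⟨l', .choR hf hs⟩
  | parL h ha hi ih =>
      obtain ⟨l', hf⟩ := ih
      exact ⟨l', .parL hf ha hi⟩
  | parR h ha hi ih =>
      obtain ⟨l', hf⟩ := ih
      exact ⟨l', .parR hf ha hi⟩
  | coo h1 h2 ha ih1 ih2 =>
      obtain ⟨l1, hf1⟩ := ih1
      obtain ⟨l2, hf2⟩ := ih2
      exact ⟨l1 * l2, .coo hf1 hf2 ha⟩

theorem anyStep_symm {bw : ℝ → ℝ} (hbw : ∀ x y : ℝ, bw (x * y) = bw x * bw y) :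
    Symmetric (AnyStep bw) := by
  rintro S T ⟨a, l, i, hf | hb⟩
  · exact ⟨a, bw l, i, Or.inr (fw_bw hbw hf)⟩
  · obtain ⟨l', hf⟩ := bw_fw hb
    exact ⟨a, l', i, Or.inl hf⟩

theorem der_keys_card {P S : Proc} (h : Der P S) : (keys S).card ≤ nk P := by
  induction h with
  | nil => simp [keys, nk]
  | pre hstd => simp [keys, std_keys hstd, nk]
  | preK h ih =>
      simp only [keys, nk]
      exact le_trans (Finset.card_insert_le _ _) (by omega)
  | choice h1 h2 ih1 ih2 =>
      simp only [keys, nk]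
      exact le_trans (Finset.card_union_le _ _) (by omega)
  | par h1 h2 ih1 ih2 =>
      simp only [keys, nk]
      exact le_trans (Finset.card_union_le _ _) (by omega)

theorem der_rename {P S : Proc} (f : ℕ → ℕ) (h : Der P S) : Der P (rename f S) := by
  induction h with
  | nil => exact .nil
  | @pre a lam Q hstd =>
      have : rename f (Proc.pre a lam Q) = .pre a lam Q := by
        simp [rename, std_rename f hstd]
      rw [this]; exact .pre hstd
  | preK h ih => exact .preK ih
  | choice h1 h2 ih1 ih2 => exact .choice ih1 ih2
  | par h1 h2 ih1 ih2 => exact .par ih1 ih2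

theorem exists_perm_lt (s : Finset ℕ) : ∃ f : ℕ ≃ ℕ, ∀ x ∈ s, f x < s.card := by
  classical
  induction s using Finset.induction_on with
  | empty => exact ⟨Equiv.refl ℕ, by simp⟩
  | @insert a s ha ih =>
      obtain ⟨f, hf⟩ := ih
      refine ⟨f.trans (Equiv.swap (f a) s.card), ?_⟩
      intro x hx
      rw [Finset.card_insert_of_notMem ha]
      rcases Finset.mem_insert.1 hx with rfl | hx
      · simp [Equiv.trans_apply, Equiv.swap_apply_left]
      · have h1 : f x ≠ f a := fun h => ha (f.injective h ▸ hx)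
        have h2 : f x ≠ s.card := Nat.ne_of_lt (hf x hx)
        simp only [Equiv.trans_apply, Equiv.swap_apply_of_ne_of_ne h1 h2]
        exact Nat.lt_succ_of_lt (hf x hx)

/-- The finite set of decorations of a standard process with keys `< N`. -/
noncomputable def Deco (N : ℕ) : Proc → Finset Proc
  | .nil => {.nil}
  | .pre a lam Q => insert (.pre a lam Q)
      (((Finset.range N) ×ˢ Deco N Q).image fun p => .preK a lam p.1 p.2)
  | .preK _ _ _ _ => ∅
  | .choice Q1 Q2 => ((Deco N Q1) ×ˢ (Deco N Q2)).image fun p => .choice p.1 p.2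
  | .par L Q1 Q2 => ((Deco N Q1) ×ˢ (Deco N Q2)).image fun p => .par L p.1 p.2

theorem mem_Deco {N : ℕ} {P S : Proc} (h : Der P S)
    (hk : keys S ⊆ Finset.range N) : S ∈ Deco N P := by
  induction h with
  | nil => simp [Deco]
  | pre hstd => simp [Deco]
  | @preK a lam Q i S hd ih =>
      simp only [keys] at hk
      have hi : i ∈ Finset.range N := hk (Finset.mem_insert_self _ _)
      have hs : keys S ⊆ Finset.range N :=
        fun x hx => hk (Finset.mem_insert_of_mem hx)
      simp only [Deco]
      exact Finset.mem_insert_of_mem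
        (Finset.mem_image.2 ⟨(i, S), Finset.mem_product.2 ⟨hi, ih hs⟩, rfl⟩)
  | @choice Q1 Q2 S1 S2 h1 h2 ih1 ih2 =>
      simp only [keys] at hk
      obtain ⟨hk1, hk2⟩ := Finset.union_subset_iff.1 hk
      simp only [Deco]
      exact Finset.mem_image.2 ⟨(S1, S2), Finset.mem_product.2 ⟨ih1 hk1, ih2 hk2⟩, rfl⟩
  | @par L Q1 Q2 S1 S2 h1 h2 ih1 ih2 =>
      simp only [keys] at hk
      obtain ⟨hk1, hk2⟩ := Finset.union_subset_iff.1 hk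
      simp only [Deco]
      exact Finset.mem_image.2 ⟨(S1, S2), Finset.mem_product.2 ⟨ih1 hk1, ih2 hk2⟩, rfl⟩

theorem der_reach {bw : ℝ → ℝ} {P S T : Proc} (hP : Der P S)
    (h : ReachAny bw S T) : Der P T := by
  induction h with
  | refl => exact hP
  | tail h step ih =>
      obtain ⟨a, l, i, hf | hb⟩ := step
      · exact der_fw hf ih
      · exact der_bw hb ih

/-- The underlying CTMC `M⟦R⟧` of a reachable process is time homogeneous
(its rates are constants, which holds by construction) and ergodic: its state
graph — classes of `≡_K`-equivalent processes reachable from `R` — is a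
finite strongly connected component. -/
theorem underlying_ctmc_ergodic (bw : ℝ → ℝ)
    (hbw : ∀ x y : ℝ, bw (x * y) = bw x * bw y) {R : Proc} (hR : Reachable R) :
    (∃ F : Finset Proc, ∀ S, ReachAny bw R S → ∃ T ∈ F, KEq S T) ∧
    (∀ S S', ReachAny bw R S → ReachAny bw R S' → ReachAny bw S S') := by
  obtain ⟨P, hPstd, hPR⟩ := hR
  have hDerR : Der P R := by
    induction hPR with
    | refl => exact der_refl hPstd
    | tail h step ih =>
        obtain ⟨ℓ, hf⟩ := step
        exact der_fw hf ih
  constructor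
  · refine ⟨Deco (nk P) P, ?_⟩
    intro S hS
    have hDS : Der P S := der_reach hDerR hS
    obtain ⟨f, hf⟩ := exists_perm_lt (keys S)
    refine ⟨rename f S, ?_, ⟨f, rfl⟩⟩
    apply mem_Deco (der_rename f hDS)
    rw [keys_rename]
    intro x hx
    obtain ⟨y, hy, rfl⟩ := Finset.mem_image.1 hx
    exact Finset.mem_range.2 (lt_of_lt_of_le (hf y hy) (der_keys_card hDS))
  · intro S S' hS hS'
    exact ((@Relation.ReflTransGen.symmetric _ _ ⟨fun _ _ h => anyStep_symm hbw h⟩).symm _ _ hS).trans hS'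

end RMPC
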